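/- Let f ∈ R be arbitrary and let δ be the k-linear derivation of R determined by δ(x) = f and δ(g) = xg. Then δ^p(g) = δ^{p−2}(f)·g + x^p·g; equivalently, δ^p(g) = δ^{p−1}(x)·g + x^p·g. -/

import Mathlib

set_option synthInstance.maxHeartbeats 1000000
set_option maxHeartbeats 1000000

open Polynomial LinearMap Finset

section AuxRing

variable {M : Type*} [AddCommGroup M]

/-- In a `p`-torsion abelian group, `(p-1).choose i` acts as `(-1)^i`. -/
private lemma choose_smul_eq {p : ℕ} (hp : p.Prime) (htor : ∀ z : M, p • z = 0) :
    ∀ i ≤ p - 1, ∀ z : M, ((p - 1).choose i) • z = ((-1 : ℤ) ^ i) • z := by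
  intro i
  induction i with
  | zero => intro _ z; simp
  | succ i ih =>
    intro hi z
    have hi' : i ≤ p - 1 := le_trans (Nat.le_succ i) hi
    have h1 : p - 1 + 1 = p := Nat.succ_pred_eq_of_pos hp.pos
    have hpascal : p.choose (i + 1) = (p - 1).choose i + (p - 1).choose (i + 1) := by
      have := Nat.choose_succ_succ (p - 1) i
      simpa [Nat.succ_eq_add_one, h1] using this
    have hdvd : p ∣ p.choose (i + 1) :=
      Nat.Prime.dvd_choose_self hp (Nat.succ_ne_zero i) (by omega)
    obtain ⟨c, hc⟩ := hdvd
    have h0 : p.choose (i + 1) • z = 0 := by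
      rw [hc, mul_comm, mul_smul, htor, smul_zero]
    rw [hpascal, add_smul, ih hi' z] at h0
    have : ((p - 1).choose (i + 1)) • z = -(((-1 : ℤ) ^ i) • z) := by
      linear_combination (norm := abel) h0
    rw [this, pow_succ, mul_smul]
    simp

variable {A : Type*} [Ring A]

/-- The key "geometric sum equals iterated commutator" identity in characteristic `p`. -/
private lemma geom_sum_eq_ad {p : ℕ} (hp : p.Prime) (hodd : Odd p)
    (htor : ∀ z : A, p • z = 0) (x y : A) :
    ∑ k ∈ Finset.range p, x ^ k * y * x ^ (p - 1 - k) =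
      (fun z => x * z - z * x)^[p - 1] y := by
  classical
  set L : Module.End ℕ A := LinearMap.mulLeft ℕ x with hL
  set Rr : Module.End ℕ A := LinearMap.mulRight ℕ x with hRr
  have hcomm : Commute L (-Rr) := (LinearMap.commute_mulLeft_right (R := ℕ) x x).neg_right
  have hexp := Commute.add_pow hcomm (p - 1)
  have h1 : p - 1 + 1 = p := Nat.succ_pred_eq_of_pos hp.pos
  rw [h1] at hexp
  have heven : Even (p - 1) := Nat.Odd.sub_odd hodd odd_one
  -- apply both sides to y
  have happ := congrArg (fun F : Module.End ℕ A => F y) hexp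
  -- LHS is the iterate
  have hfun : ⇑(L + -Rr) = fun z => x * z - z * x := by
    funext z
    simp [hL, hRr, sub_eq_add_neg]
  have hLHS : ((L + -Rr) ^ (p - 1)) y = (fun z => x * z - z * x)^[p - 1] y := by
    rw [Module.End.pow_apply, ← hfun]
  -- RHS terms
  have hRHS : (∑ m ∈ Finset.range p, L ^ m * (-Rr) ^ (p - 1 - m) * ((p - 1).choose m : Module.End ℕ A)) y
      = ∑ m ∈ Finset.range p, x ^ m * y * x ^ (p - 1 - m) := by
    rw [LinearMap.sum_apply]
    refine Finset.sum_congr rfl fun m hm => ?_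
    have hm' : m ≤ p - 1 := by
      have := Finset.mem_range.mp hm; omega
    rw [Module.End.mul_apply, Module.End.mul_apply, Module.End.natCast_apply]
    rw [show (-Rr) ^ (p - 1 - m) = (-1) ^ (p - 1 - m) * Rr ^ (p - 1 - m) from neg_pow (R := Module.End ℕ A) _ _]
    rw [Module.End.mul_apply]
    have hneg : ((-1 : Module.End ℕ A) ^ (p - 1 - m)) ((Rr ^ (p - 1 - m)) (((p-1).choose m) • y))
        = ((-1 : ℤ) ^ (p - 1 - m)) • ((Rr ^ (p - 1 - m)) (((p-1).choose m) • y)) := by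
      rw [show ((-1 : Module.End ℕ A) ^ (p - 1 - m)) = (((-1 : ℤ) ^ (p - 1 - m) : ℤ) : Module.End ℕ A) by push_cast; rfl]
      rw [Module.End.intCast_apply]
    rw [hneg]
    rw [hRr, LinearMap.pow_mulRight, LinearMap.mulRight_apply]
    rw [hL, LinearMap.pow_mulLeft, LinearMap.mulLeft_apply]
    rw [choose_smul_eq hp htor m hm' y]
    have h3 : p - 1 - m + m = p - 1 := by omega
    rw [smul_mul_assoc, mul_smul_comm, mul_smul_comm, smul_smul, ← pow_add, h3,
      Even.neg_one_pow heven, one_smul, ← mul_assoc]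
  rw [hLHS, hRHS] at happ
  exact happ.symm

/-- Noncommutative derivative of a power. -/
private lemma deriv_pow_noncomm {S : Type*} [Semiring S] (f : S[X]) (n : ℕ) :
    derivative (f ^ n) = ∑ k ∈ Finset.range n, f ^ k * derivative f * f ^ (n - 1 - k) := by
  induction n with
  | zero => simp
  | succ n ih =>
    rw [pow_succ, derivative_mul, ih, Finset.sum_range_succ, Finset.sum_mul]
    congr 1
    · refine (Finset.sum_congr rfl fun k hk => ?_)
      have hk' : k < n := Finset.mem_range.mp hk
      have h2 : n - 1 - k + 1 = n + 1 - 1 - k := by omega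
      rw [mul_assoc, ← pow_succ, h2]
    · simp [Nat.sub_self]

/-- `coeff (f^n) 0 = (coeff f 0)^n`. -/
private lemma coeff_pow_zero' {S : Type*} [Semiring S] (f : S[X]) (n : ℕ) :
    (f ^ n).coeff 0 = (f.coeff 0) ^ n := by
  induction n with
  | zero => simp
  | succ n ih => rw [pow_succ, Polynomial.mul_coeff_zero, ih, pow_succ]

/-- `coeff (f^n) n = (coeff f 1)^n` when `natDegree f ≤ 1`. -/
private lemma coeff_pow_self {S : Type*} [Semiring S] (f : S[X]) (hf : f.natDegree ≤ 1) (n : ℕ) :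
    (f ^ n).coeff n = (f.coeff 1) ^ n := by
  induction n with
  | zero => simp
  | succ n ih =>
    rw [pow_succ', Polynomial.coeff_mul]
    rw [Finset.sum_eq_single (1, n)]
    · rw [ih, pow_succ']
    · rintro ⟨i, j⟩ hij hne
      have hij' : i + j = n + 1 := Finset.HasAntidiagonal.mem_antidiagonal.mp hij
      rcases Nat.lt_or_ge 1 i with hi | hi
      · have : f.coeff i = 0 := Polynomial.coeff_eq_zero_of_natDegree_lt (lt_of_le_of_lt hf hi)
        rw [this, zero_mul]
      · interval_cases i
        · have hj : j = n + 1 := by omega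
          subst hj
          have : (f ^ n).natDegree < n + 1 := by
            calc (f ^ n).natDegree ≤ n * f.natDegree := Polynomial.natDegree_pow_le
            _ ≤ n * 1 := Nat.mul_le_mul_left n hf
            _ < n + 1 := by omega
          rw [Polynomial.coeff_eq_zero_of_natDegree_lt this, mul_zero]
        · have hj : j = n := by omega
          subst hj
          exact absurd rfl hne
    · intro h
      exact absurd (Finset.HasAntidiagonal.mem_antidiagonal.mpr (by omega)) h

end AuxRing


/-- The commutative ring `R = k[x,g]/(g^p - 1)`. -/
noncomputable abbrev Rring (k : Type) [Field k] (p : ℕ) : Type :=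
  MvPolynomial (Fin 2) k ⧸
    Ideal.span {(MvPolynomial.X 1 : MvPolynomial (Fin 2) k) ^ p - 1}

noncomputable abbrev xR (k : Type) [Field k] (p : ℕ) : Rring k p :=
  Ideal.Quotient.mk _ (MvPolynomial.X 0)
noncomputable abbrev gR (k : Type) [Field k] (p : ℕ) : Rring k p :=
  Ideal.Quotient.mk _ (MvPolynomial.X 1)

private lemma main_general {k : Type} [Field k] {R : Type} [CommRing R] [Algebra k R]
    (p : ℕ) (hp : p.Prime) (hodd : Odd p) [CharP k p]
    (x g : R) (δ : Derivation k R R) (hg : δ g = x * g) :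
    (⇑δ)^[p] g = ((⇑δ)^[p - 1] x) * g + x ^ p * g := by
  classical
  have hp2 : 2 ≤ p := hp.two_le
  have hpne2 : p ≠ 2 := by
    rintro rfl
    exact (by decide : ¬ Odd 2) hodd
  have hp3 : 3 ≤ p := by
    rcases Nat.lt_or_ge p 3 with h | h
    · omega
    · exact h
  set d : Module.End k R := δ.toLinearMap with hd
  set Lm : R → Module.End k R := fun u => LinearMap.mulLeft k u with hLm
  have hd_apply : ∀ v, d v = δ v := fun v => rfl
  have hLm_apply : ∀ u v, Lm u v = u * v := fun u v => rfl
  have hdL : ∀ u : R, d * Lm u - Lm u * d = Lm (δ u) := by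
    intro u
    ext v
    simp only [LinearMap.sub_apply, Module.End.mul_apply, hd_apply, hLm_apply]
    rw [Derivation.leibniz]
    simp only [smul_eq_mul]
    ring
  have hLL : ∀ u v : R, Lm u * Lm v = Lm v * Lm u := by
    intro u v
    ext w
    simp only [Module.End.mul_apply, hLm_apply]
    ring
  set W : Polynomial (Module.End k R) := Polynomial.C d * Polynomial.X + Polynomial.C (Lm x) with hW
  have htorP : ∀ z : Polynomial (Module.End k R), p • z = 0 := by
    intro z
    rw [← Nat.cast_smul_eq_nsmul k p z, CharP.cast_eq_zero k p, zero_smul]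
  -- key additive cancellation helper
  have habel : ∀ A A' B Z : Polynomial (Module.End k R), A - A' = Z → B + A - (A' + B) = Z := by
    intro A A' B Z h
    rw [← h]; abel
  have hstep : ∀ (m : ℕ) (e : Module.End k R),
      W * (Polynomial.monomial m e) - (Polynomial.monomial m e) * W
        = Polynomial.monomial (m + 1) (d * e - e * d)
          + Polynomial.monomial m (Lm x * e - e * Lm x) := by
    intro m e
    rw [hW, Polynomial.C_mul_X_eq_monomial, ← Polynomial.monomial_zero_left (a := Lm x)]
    simp only [add_mul, mul_add, Polynomial.monomial_mul_monomial, Nat.add_comm 1 m,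
      Nat.zero_add, Nat.add_zero]
    rw [map_sub, map_sub]
    abel
  set a : ℕ → R := fun j => (⇑δ)^[j] x with ha
  have hiterad : ∀ j : ℕ,
      (fun z : Polynomial (Module.End k R) => W * z - z * W)^[j + 1] (Polynomial.C d)
        = Polynomial.monomial j (-(Lm (a (j + 1)))) := by
    intro j
    induction j with
    | zero =>
      rw [Function.iterate_one]
      have ha1 : a 1 = δ x := by rw [ha]; exact Function.iterate_one (⇑δ) ▸ rfl
      show W * Polynomial.C d - Polynomial.C d * W = Polynomial.monomial 0 (-(Lm (a 1)))
      rw [← Polynomial.monomial_zero_left (a := d), hstep 0 d]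
      have e1 : d * d - d * d = (0 : Module.End k R) := sub_self _
      have e2 : Lm x * d - d * Lm x = -(Lm (δ x)) := by
        rw [← hdL x]; abel
      rw [e1, e2, map_zero, zero_add, ha1]
    | succ j ih =>
      rw [Function.iterate_succ_apply', ih]
      show W * Polynomial.monomial j (-(Lm (a (j + 1))))
          - Polynomial.monomial j (-(Lm (a (j + 1)))) * W
          = Polynomial.monomial (j + 1) (-(Lm (a (j + 1 + 1))))
      rw [hstep j (-(Lm (a (j + 1))))]
      have haj : δ (a (j + 1)) = a (j + 1 + 1) := by
        rw [ha]
        exact (Function.iterate_succ_apply' (⇑δ) (j + 1) x).symm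
      have e1 : d * -(Lm (a (j + 1))) - -(Lm (a (j + 1))) * d = -(Lm (a (j + 1 + 1))) := by
        rw [show d * -(Lm (a (j + 1))) = -(d * Lm (a (j + 1))) from mul_neg (α := Module.End k R) _ _,
          show -(Lm (a (j + 1))) * d = -(Lm (a (j + 1)) * d) from neg_mul (α := Module.End k R) _ _, ← haj, ← hdL (a (j + 1))]
        abel
      have e2 : Lm x * -(Lm (a (j + 1))) - -(Lm (a (j + 1))) * Lm x = (0 : Module.End k R) := by
        rw [show Lm x * -(Lm (a (j + 1))) = -(Lm x * Lm (a (j + 1))) from mul_neg (α := Module.End k R) _ _,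
          show -(Lm (a (j + 1))) * Lm x = -(Lm (a (j + 1)) * Lm x) from neg_mul (α := Module.End k R) _ _, hLL x (a (j + 1))]
        abel
      rw [e1, e2, map_zero, add_zero]
  set P : Polynomial (Module.End k R) := W ^ p with hP
  have hderiv : Polynomial.derivative P = Polynomial.monomial (p - 2) (-(Lm (a (p - 1)))) := by
    rw [hP, deriv_pow_noncomm]
    have hdW : Polynomial.derivative W = Polynomial.C d := by
      rw [hW]; simp
    rw [hdW, geom_sum_eq_ad hp hodd htorP W (Polynomial.C d)]
    have h1 : p - 1 = (p - 2) + 1 := by omega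
    rw [h1, hiterad (p - 2), ← h1]
  have hdegW : W.natDegree ≤ 1 := by
    rw [hW]
    refine le_trans (Polynomial.natDegree_add_le _ _) ?_
    simp only [Polynomial.natDegree_C, max_le_iff]
    exact ⟨le_trans (Polynomial.natDegree_C_mul_le d Polynomial.X) Polynomial.natDegree_X_le,
      Nat.zero_le 1⟩
  have hc0 : P.coeff 0 = Lm (x ^ p) := by
    rw [hP, coeff_pow_zero']
    have h7 : W.coeff 0 = Lm x := by
      rw [hW]
      simp [Polynomial.coeff_C_mul]
    rw [h7, hLm, LinearMap.pow_mulLeft]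
  have hcp : P.coeff p = d ^ p := by
    rw [hP, coeff_pow_self W hdegW]
    have h8 : W.coeff 1 = d := by
      rw [hW]
      simp [Polynomial.coeff_C_mul, Polynomial.coeff_C]
    rw [h8]
  have hsm : ∀ (c : k) (u : Module.End k R), u * (algebraMap k (Module.End k R) c) = c • u := fun c u => by
    rw [← Algebra.commutes, ← Algebra.smul_def]
  have key : ∀ n : ℕ, ((n : k) + 1) • P.coeff (n + 1) = (Polynomial.derivative P).coeff n := by
    intro n
    rw [Polynomial.coeff_derivative]
    rw [show ((n : Module.End k R) + 1) = algebraMap k (Module.End k R) ((n : k) + 1) by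
      rw [map_add, map_one, map_natCast]]
    rw [hsm]
  have hcmid : ∀ n, 1 ≤ n → n ≤ p - 2 → P.coeff n = 0 := by
    intro n h1 h2
    obtain ⟨m, rfl⟩ : ∃ m, n = m + 1 := ⟨n - 1, by omega⟩
    have hkey := key m
    have hz : (Polynomial.derivative P).coeff m = 0 := by
      rw [hderiv, Polynomial.coeff_monomial, if_neg (by omega)]
    rw [hz] at hkey
    have hc : ((m : k) + 1) ≠ 0 := by
      rw [show ((m : k) + 1) = ((m + 1 : ℕ) : k) by push_cast; ring]
      rw [Ne, CharP.cast_eq_zero_iff k p]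
      intro hdvd
      have := Nat.le_of_dvd (by omega) hdvd
      omega
    calc P.coeff (m + 1) = ((m : k) + 1)⁻¹ • (((m : k) + 1) • P.coeff (m + 1)) := by
          rw [smul_smul, inv_mul_cancel₀ hc, one_smul]
    _ = 0 := by rw [hkey, smul_zero]
  have hcpm1 : P.coeff (p - 1) = Lm (a (p - 1)) := by
    have hkey := key (p - 2)
    have hz : (Polynomial.derivative P).coeff (p - 2) = -(Lm (a (p - 1))) := by
      rw [hderiv, Polynomial.coeff_monomial, if_pos rfl]
    have hcast : ((p - 2 : ℕ) : k) + 1 = -1 := by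
      have h1 : ((p - 2 : ℕ) : k) + 1 = ((p - 1 : ℕ) : k) := by
        rw [show (p - 1) = (p - 2) + 1 by omega]
        push_cast
        ring
      have h2 : ((p - 1 : ℕ) : k) + 1 = 0 := by
        have h3 : ((p - 1 + 1 : ℕ) : k) = 0 := by
          rw [show p - 1 + 1 = p by omega, CharP.cast_eq_zero]
        push_cast at h3
        linear_combination h3
      rw [h1]
      linear_combination h2
    rw [hz, hcast, show p - 2 + 1 = p - 1 by omega] at hkey
    rw [show (-1 : k) • P.coeff (p - 1) = -P.coeff (p - 1) from neg_one_smul k (M := Module.End k R) _, neg_inj] at hkey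
    exact hkey
  -- evaluation at 1
  set φ : Polynomial (Module.End k R) →+* Module.End k R :=
    Polynomial.eval₂RingHom' (RingHom.id (Module.End k R)) (1 : Module.End k R)
      (fun a => Commute.one_right _) with hφ
  have hφapply : ∀ q : Polynomial (Module.End k R),
      φ q = Polynomial.eval₂ (RingHom.id (Module.End k R)) 1 q := fun q => rfl
  have hφW : φ W = d + Lm x := by
    rw [hW, map_add, hφapply, hφapply, Polynomial.C_mul_X_eq_monomial,
      Polynomial.eval₂_monomial, Polynomial.eval₂_C]
    simp
  have hφP1 : φ P = (d + Lm x) ^ p := by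
    rw [hP, map_pow, hφW]
  have hφP2 : φ P = ∑ i ∈ Finset.range (p + 1), P.coeff i := by
    rw [hφapply, Polynomial.eval₂_eq_sum_range' (RingHom.id (Module.End k R)) (by
      calc P.natDegree ≤ p * W.natDegree := Polynomial.natDegree_pow_le
      _ ≤ p * 1 := Nat.mul_le_mul_left p hdegW
      _ < p + 1 := by omega) 1]
    simp
  have hsum : ∑ i ∈ Finset.range (p + 1), P.coeff i = Lm (x ^ p) + (Lm (a (p - 1)) + d ^ p) := by
    have hsub : ({0, p - 1, p} : Finset ℕ) ⊆ Finset.range (p + 1) := by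
      intro i hi
      simp only [Finset.mem_insert, Finset.mem_singleton] at hi
      rcases hi with rfl | rfl | rfl <;> simp only [Finset.mem_range] <;> omega
    rw [← Finset.sum_subset hsub (by
      intro i hi hni
      simp only [Finset.mem_insert, Finset.mem_singleton, not_or] at hni
      have hir : i < p + 1 := Finset.mem_range.mp hi
      exact hcmid i (by omega) (by omega))]
    rw [Finset.sum_insert (by
        simp only [Finset.mem_insert, Finset.mem_singleton, not_or]
        omega),
      Finset.sum_insert (by
        simp only [Finset.mem_singleton]
        omega),
      Finset.sum_singleton, hc0, hcpm1, hcp]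
  have hT : (d + Lm x) ^ p = Lm (x ^ p) + (Lm (a (p - 1)) + d ^ p) := by
    rw [← hφP1, hφP2, hsum]
  have hd1 : (d ^ p) (1 : R) = 0 := by
    obtain ⟨q, hq⟩ : ∃ q, p = q + 1 := ⟨p - 1, by omega⟩
    rw [hq, pow_succ, Module.End.mul_apply, hd_apply, Derivation.map_one_eq_zero, map_zero]
  have hiterg : ∀ n : ℕ, (⇑δ)^[n] g = (((d + Lm x) ^ n) (1 : R)) * g := by
    intro n
    induction n with
    | zero => simp
    | succ n ih =>
      rw [Function.iterate_succ_apply', ih]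
      set c : R := ((d + Lm x) ^ n) 1 with hc
      rw [Derivation.leibniz, hg, smul_eq_mul, smul_eq_mul]
      rw [pow_succ', Module.End.mul_apply, ← hc, LinearMap.add_apply, hd_apply, hLm_apply]
      ring
  rw [hiterg p, hT, LinearMap.add_apply, LinearMap.add_apply, hd1, hLm_apply, hLm_apply]
  rw [ha]
  ring

theorem delta_pow_p_g (k : Type) [Field k] (p : ℕ) (hp : p.Prime) (hodd : Odd p) [CharP k p]
    (f : Rring k p) (δ : Derivation k (Rring k p) (Rring k p))
    (hx : δ (xR k p) = f) (hg : δ (gR k p) = xR k p * gR k p) :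
    (⇑δ)^[p] (gR k p) = (⇑δ)^[p - 2] f * gR k p + xR k p ^ p * gR k p ∧
      (⇑δ)^[p] (gR k p) = (⇑δ)^[p - 1] (xR k p) * gR k p + xR k p ^ p * gR k p := by
  have hmain := main_general p hp hodd (xR k p) (gR k p) δ hg
  have hfx : (⇑δ)^[p - 1] (xR k p) = (⇑δ)^[p - 2] f := by
    rw [show p - 1 = (p - 2) + 1 by
      have := hp.two_le
      have : p ≠ 2 := by rintro rfl; exact (by decide : ¬ Odd 2) hodd
      omega]
    rw [Function.iterate_succ_apply, hx]
  exact ⟨by rw [hmain, hfx], hmain⟩
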